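/- Let n be a positive natural number and let λ be a partition of n. Let p be the total number of parts of λ (counted with multiplicity) and let d be the number of distinct values occurring among the parts of λ. Then p + d ≤ n + 1. -/
import Mathlib

/-- For a partition `λ` of a positive natural number `n`, the total number of parts
(counted with multiplicity) plus the number of distinct part values is at most `n + 1`. -/
theorem parts_card_add_distinct_card_le (n : ℕ) (hn : 0 < n) (lam : n.Partition) :
    Multiset.card lam.parts + lam.parts.toFinset.card ≤ n + 1 := by
  classical
  set s := lam.parts with hs
  have hcard : Multiset.card s = ∑ v ∈ s.toFinset, s.count v :=
    (Multiset.toFinset_sum_count_eq s).symm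
  have hsum : ∑ v ∈ s.toFinset, s.count v * v = n := by
    have := congrArg Multiset.sum (Multiset.toFinset_sum_count_nsmul_eq s)
    rw [lam.parts_sum] at this
    rw [← this, Multiset.sum_sum]
    simp [Multiset.sum_nsmul, mul_comm]
  have hterm : ∀ v ∈ s.toFinset.erase 1, s.count v + 1 ≤ s.count v * v := by
    intro v hv
    have hmem := Multiset.mem_toFinset.1 (Finset.mem_of_mem_erase hv)
    have hv1 : v ≠ 1 := Finset.ne_of_mem_erase hv
    have hpos : 0 < v := lam.parts_pos hmem
    have hv2 : 2 ≤ v := by omega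
    have hc : 1 ≤ s.count v := Multiset.one_le_count_iff_mem.2 hmem
    calc s.count v + 1 ≤ s.count v * 2 := by omega
      _ ≤ s.count v * v := Nat.mul_le_mul_left _ hv2
  have key : ∑ v ∈ s.toFinset, (s.count v + 1) ≤ (∑ v ∈ s.toFinset, s.count v * v) + 1 := by
    by_cases h1 : 1 ∈ s.toFinset
    · rw [← Finset.add_sum_erase _ _ h1, ← Finset.add_sum_erase _ _ h1]
      have := Finset.sum_le_sum hterm
      simp only [mul_one]
      omega
    · have h2 : ∀ v ∈ s.toFinset, s.count v + 1 ≤ s.count v * v := by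
        intro v hv
        exact hterm v (Finset.mem_erase.2 ⟨fun h => h1 (h ▸ hv), hv⟩)
      exact le_trans (Finset.sum_le_sum h2) (Nat.le_succ _)
  calc Multiset.card s + s.toFinset.card
      = ∑ v ∈ s.toFinset, (s.count v + 1) := by
        rw [hcard, Finset.sum_add_distrib, Finset.sum_const, smul_eq_mul, mul_one]
    _ ≤ (∑ v ∈ s.toFinset, s.count v * v) + 1 := key
    _ = n + 1 := by rw [hsum]
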